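/- Let E = EuclideanSpace ℝ (Fin 3), let h : E → ℝ be continuously differentiable, let k : E → E be continuous, and let γ > 0. Suppose ⟪∇h(y), k(y)⟫ ≥ -γ·h(y) for all y ∈ E. If y : ℝ → E is differentiable with y'(t) = k(y(t)) for all t ≥ 0 and h(y(0)) ≥ 0, then h(y(t)) ≥ 0 for all t ≥ 0 (Proposition 1, gradient form: the 0-superlevel set of h is forward invariant for the single-integrator closed-loop system ẏ = k(y)). -/

import Mathlib

open scoped RealInnerProductSpace

/-- Proposition 1 (gradient form): if the CBF condition `⟪∇h(y), k(y)⟫ ≥ -γ h(y)` holds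
everywhere, then the 0-superlevel set of `h` is forward invariant for `ẏ = k(y)`. -/
theorem forward_invariance_first_order_gradient
    (h : EuclideanSpace ℝ (Fin 3) → ℝ) (hh : ContDiff ℝ 1 h)
    (k : EuclideanSpace ℝ (Fin 3) → EuclideanSpace ℝ (Fin 3)) (hk : Continuous k)
    (γ : ℝ) (hγ : 0 < γ)
    (hcbf : ∀ y, ⟪gradient h y, k y⟫ ≥ -γ * h y)
    (y : ℝ → EuclideanSpace ℝ (Fin 3)) (hy : Differentiable ℝ y)
    (hode : ∀ t, 0 ≤ t → deriv y t = k (y t))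
    (h0 : h (y 0) ≥ 0) :
    ∀ t, 0 ≤ t → h (y t) ≥ 0 := by
  set g : ℝ → ℝ := fun t => h (y t) * Real.exp (γ * t) with hgdef
  have hdy : ∀ t : ℝ, HasDerivAt y (deriv y t) t := fun t => (hy t).hasDerivAt
  have hcomp : ∀ t : ℝ,
      HasDerivAt (fun s => h (y s)) ⟪gradient h (y t), deriv y t⟫ t := by
    intro t
    have h1 := ((hh.differentiable one_ne_zero) (y t)).hasGradientAt
    have h2 := h1.hasFDerivAt.comp_hasDerivAt t (hdy t)
    simpa [Function.comp_def] using h2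
  have hexp : ∀ t : ℝ, HasDerivAt (fun s => Real.exp (γ * s)) (γ * Real.exp (γ * t)) t := by
    intro t
    have := (Real.hasDerivAt_exp (γ * t)).comp t ((hasDerivAt_id t).const_mul γ)
    simpa [mul_comm, Function.comp_def] using this
  have hgderiv : ∀ t : ℝ, HasDerivAt g
      (⟪gradient h (y t), deriv y t⟫ * Real.exp (γ * t)
        + h (y t) * (γ * Real.exp (γ * t))) t := by
    intro t
    exact (hcomp t).mul (hexp t)
  have hgdiff : Differentiable ℝ g := fun t => (hgderiv t).differentiableAt
  have hmono : MonotoneOn g (Set.Ici (0 : ℝ)) := by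
    apply monotoneOn_of_deriv_nonneg (convex_Ici 0) hgdiff.continuous.continuousOn
      (fun x _ => (hgdiff x).differentiableWithinAt)
    intro x hx
    rw [interior_Ici] at hx
    have hx0 : (0 : ℝ) ≤ x := le_of_lt hx
    rw [(hgderiv x).deriv]
    have hkx : deriv y x = k (y x) := hode x hx0
    have hc := hcbf (y x)
    have hepos : (0 : ℝ) < Real.exp (γ * x) := Real.exp_pos _
    rw [hkx]
    nlinarith [hc, hepos]
  intro t ht
  have := hmono (Set.self_mem_Ici) ht ht
  have hg0 : g 0 = h (y 0) := by simp [hgdef]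
  have hgt : (0 : ℝ) ≤ g t := by rw [hg0] at this; linarith
  have hepos : (0 : ℝ) < Real.exp (γ * t) := Real.exp_pos _
  simp only [hgdef] at hgt
  nlinarith [hgt, hepos]
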